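/- arXiv:1712.00704 — 6 statements merged into one kernel-verified Lean document; each statement's English description precedes it below -/
import Mathlib

section
/- Let A ∈ ℝ^{n1×n2×n3} and B ∈ ℝ^{n2×n1×n3} be third-order tensors and let C = A * B be their tensor product (t-product). Then the trace of C (sum of traces of its frontal slices) satisfies tr(A * B) = tr((Σ_{i=1}^{n3} A^{(i)}) · (Σ_{i=1}^{n3} B^{(i)})), i.e., it equals the trace of the product of the sums of frontal slices of A and B. -/
open Matrix

/-- The t-th frontal fSlice of a third-order tensor, as a matrix. -/
def fSlice {n1 n2 n3 : ℕ} (A : Fin n1 → Fin n2 → Fin n3 → ℝ) (t : Fin n3) :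
    Matrix (Fin n1) (Fin n2) ℝ :=
  fun i j => A i j t

/-- The t-product of third-order tensors: fSlice-wise circular convolution. -/
def tProd {n1 n2 n4 n3 : ℕ} (A : Fin n1 → Fin n2 → Fin n3 → ℝ)
    (B : Fin n2 → Fin n4 → Fin n3 → ℝ) : Fin n1 → Fin n4 → Fin n3 → ℝ :=
  fun i j k => ∑ t : Fin n3, (fSlice A (k - t) * fSlice B t) i j

/-- tr(A * B) = tr((Σᵢ A⁽ⁱ⁾)·(Σᵢ B⁽ⁱ⁾)). -/
theorem trace_tprod_eq_trace_sum_slices {n1 n2 n3 : ℕ}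
    (A : Fin n1 → Fin n2 → Fin n3 → ℝ) (B : Fin n2 → Fin n1 → Fin n3 → ℝ) :
    ∑ k : Fin n3, (fSlice (tProd A B) k).trace
      = ((∑ i : Fin n3, fSlice A i) * (∑ i : Fin n3, fSlice B i)).trace := by
  cases n3 with
  | zero => simp
  | succ n =>
    have hL : ∀ k : Fin (n+1),
        fSlice (tProd A B) k = ∑ t : Fin (n+1), fSlice A (k - t) * fSlice B t := by
      intro k; ext i j
      simp [fSlice, tProd, Matrix.sum_apply]
    calc ∑ k : Fin (n+1), (fSlice (tProd A B) k).trace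
        = ∑ k : Fin (n+1), ∑ t : Fin (n+1), (fSlice A (k - t) * fSlice B t).trace := by
          simp [hL, trace_sum]
      _ = ∑ t : Fin (n+1), ∑ k : Fin (n+1), (fSlice A (k - t) * fSlice B t).trace :=
          Finset.sum_comm
      _ = ∑ t : Fin (n+1), ∑ s : Fin (n+1), (fSlice A s * fSlice B t).trace := by
          refine Finset.sum_congr rfl fun t _ => ?_
          exact Fintype.sum_equiv (Equiv.subRight t) _ _ (fun k => rfl)
      _ = ((∑ i : Fin (n+1), fSlice A i) * (∑ i : Fin (n+1), fSlice B i)).trace := by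
          conv_rhs => rw [Matrix.sum_mul]
          simp only [Matrix.mul_sum, trace_sum]
          exact Finset.sum_comm
end

section
/- Let A ∈ ℝ^{n1×n2×n3} and B ∈ ℝ^{n2×n1×n3}. Then tr(A * B) = tr(Ā^{(1)} B̄^{(1)}), where Ā^{(1)} and B̄^{(1)} are the first frontal slices of the discrete Fourier transforms of A and B along the third dimension. -/
open Matrix Complex

/-- The k-th frontal slice of the Fourier transform along the third dimension. -/
noncomputable def fourierSlice {n1 n2 n3 : ℕ} (A : Fin n1 → Fin n2 → Fin n3 → ℝ)
    (k : Fin n3) : Matrix (Fin n1) (Fin n2) ℂ :=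
  fun i j => ∑ t : Fin n3,
    (A i j t : ℂ) * Complex.exp (-2 * Real.pi * Complex.I / n3) ^ ((t : ℕ) * (k : ℕ))

/-- tr(A * B) = tr(Ā⁽¹⁾ B̄⁽¹⁾). -/
theorem trace_tProd_eq_trace_fourier_first_slices {n1 n2 n3 : ℕ} (hn3 : 0 < n3)
    (A : Fin n1 → Fin n2 → Fin n3 → ℝ) (B : Fin n2 → Fin n1 → Fin n3 → ℝ) :
    ((∑ k : Fin n3, (fSlice (tProd A B) k).trace : ℝ) : ℂ)
      = (fourierSlice A ⟨0, hn3⟩ * fourierSlice B ⟨0, hn3⟩).trace := by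
  haveI : NeZero n3 := ⟨hn3.ne'⟩
  have h0 : ∀ {m1 m2 : ℕ} (X : Fin m1 → Fin m2 → Fin n3 → ℝ) (i : Fin m1) (j : Fin m2),
      fourierSlice X ⟨0, hn3⟩ i j = ((∑ t : Fin n3, X i j t : ℝ) : ℂ) := by
    intro m1 m2 X i j
    simp [fourierSlice]
  simp only [Matrix.trace, Matrix.diag, Matrix.mul_apply, h0]
  simp only [fSlice, tProd, Matrix.mul_apply, fSlice]
  push_cast
  rw [Finset.sum_comm]
  refine Finset.sum_congr rfl fun i _ => ?_
  rw [Finset.sum_comm]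
  calc (∑ t : Fin n3, ∑ k : Fin n3, ∑ j : Fin n2, ((A i j (k - t) : ℂ)) * (B j i t : ℂ))
      = ∑ t : Fin n3, ∑ k : Fin n3, ∑ j : Fin n2, ((A i j k : ℂ)) * (B j i t : ℂ) :=
        Finset.sum_congr rfl fun t _ =>
          Equiv.sum_comp (Equiv.subRight t) (fun k => ∑ j : Fin n2, ((A i j k : ℂ)) * (B j i t : ℂ))
    _ = ∑ k : Fin n3, ∑ t : Fin n3, ∑ j : Fin n2, ((A i j k : ℂ)) * (B j i t : ℂ) :=
        Finset.sum_comm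
    _ = ∑ k : Fin n3, ∑ j : Fin n2, ∑ t : Fin n3, ((A i j k : ℂ)) * (B j i t : ℂ) :=
        Finset.sum_congr rfl fun k _ => Finset.sum_comm
    _ = ∑ j : Fin n2, ∑ k : Fin n3, ∑ t : Fin n3, ((A i j k : ℂ)) * (B j i t : ℂ) :=
        Finset.sum_comm
    _ = ∑ j : Fin n2, (∑ k : Fin n3, (A i j k : ℂ)) * (∑ t : Fin n3, (B j i t : ℂ)) := by
        simp [Finset.sum_mul, Finset.mul_sum]
        exact Finset.sum_congr rfl fun j _ => Finset.sum_comm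
end

section
/- For a real matrix X ∈ ℝ^{m×n} and 0 ≤ r ≤ min(m,n), the truncated nuclear norm ‖X‖_r := Σ_{j=r+1}^{min(m,n)} σ_j(X) (the sum of the smallest min(m,n)−r singular values) satisfies ‖X‖_r = ‖X‖_* − max{ tr(A X Bᵀ) : A ∈ ℝ^{r×m}, B ∈ ℝ^{r×n}, A Aᵀ = I_r, B Bᵀ = I_r }, where ‖X‖_* = Σ_j σ_j(X) is the nuclear norm; moreover the maximum is attained by taking A (resp. B) to be the transposes of the first r left (resp. right) singular vectors of X. -/
open Matrix

/-- The m×n rectangular diagonal matrix with diagonal entries σ. -/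
def sigMat {m n : ℕ} (σ : Fin (min m n) → ℝ) : Matrix (Fin m) (Fin n) ℝ :=
  fun i j => if h : (i : ℕ) = (j : ℕ) ∧ (i : ℕ) < min m n then σ ⟨i, h.2⟩ else 0

lemma sigMat_eq_sum {m n : ℕ} (σ : Fin (min m n) → ℝ) :
    sigMat σ = ∑ j : Fin (min m n),
      σ j • single (Fin.castLE (min_le_left m n) j) (Fin.castLE (min_le_right m n) j) 1 := by
  ext a b
  rw [Matrix.sum_apply]
  have hterm : ∀ j : Fin (min m n),
      (σ j • single (Fin.castLE (min_le_left m n) j) (Fin.castLE (min_le_right m n) j) (1:ℝ)) a b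
      = if a = Fin.castLE (min_le_left m n) j ∧ b = Fin.castLE (min_le_right m n) j then σ j else 0 := by
    intro j
    simp [single, Matrix.smul_apply, smul_eq_mul, mul_ite]
    simp only [eq_comm]
  rw [Finset.sum_congr rfl fun j _ => hterm j]
  by_cases h : (a : ℕ) = (b : ℕ) ∧ (a : ℕ) < min m n
  · rw [show sigMat σ a b = σ ⟨a, h.2⟩ from dif_pos h]
    rw [Finset.sum_eq_single (⟨(a:ℕ), h.2⟩ : Fin (min m n))]
    · simp [Fin.ext_iff, h.1.symm]
    · intro j _ hj
      rw [if_neg]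
      intro ⟨h1, h2⟩; apply hj; ext; simpa [Fin.ext_iff] using h1.symm
    · simp
  · rw [show sigMat σ a b = 0 from dif_neg h]
    symm
    apply Finset.sum_eq_zero
    intro j _
    rw [if_neg]
    intro ⟨h1, h2⟩
    exact h ⟨by simp [h1, h2, Fin.ext_iff], by simpa [h1] using j.2⟩

lemma trace_mul_sigMat {m n r : ℕ} (σ : Fin (min m n) → ℝ)
    (P : Matrix (Fin r) (Fin m) ℝ) (Q : Matrix (Fin r) (Fin n) ℝ) :
    (P * sigMat σ * Qᵀ).trace
      = ∑ j : Fin (min m n), σ j * ∑ i : Fin r,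
          P i (Fin.castLE (min_le_left m n) j) * Q i (Fin.castLE (min_le_right m n) j) := by
  rw [sigMat_eq_sum, Matrix.mul_sum, Matrix.sum_mul, trace_sum]
  apply Finset.sum_congr rfl
  intro j _
  rw [Matrix.mul_smul, Matrix.smul_mul, trace_smul, smul_eq_mul]
  congr 1
  simp only [trace, diag_apply, mul_apply, transpose_apply, single, of_apply]
  apply Finset.sum_congr rfl
  intro i _
  rw [Finset.sum_eq_single (Fin.castLE (min_le_right m n) j)]
  · rw [Finset.sum_eq_single (Fin.castLE (min_le_left m n) j)] <;> simp +contextual [eq_comm]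
  · intro b _ hb
    rw [Finset.sum_eq_zero, zero_mul]
    intro x _
    rw [if_neg, mul_zero]
    exact fun hc => hb hc.2.symm
  · simp

lemma col_sq_bound {r m : ℕ} (P : Matrix (Fin r) (Fin m) ℝ) (hP : P * Pᵀ = 1) (a : Fin m) :
    ∑ i, P i a ^ 2 ≤ 1 := by
  set M := Pᵀ * P with hM
  have hMM : M * M = M := by
    rw [hM, Matrix.mul_assoc, ← Matrix.mul_assoc P, hP, Matrix.one_mul]
  have hsym : ∀ a b, M a b = M b a := by
    intro a b
    simp [hM, mul_apply, transpose_apply, mul_comm]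
  have hdiag : M a a = ∑ i, P i a ^ 2 := by
    simp [hM, mul_apply, transpose_apply, sq]
  have h2 : M a a = ∑ k, (M a k) ^ 2 := by
    conv_lhs => rw [← hMM]
    simp [mul_apply, sq, hsym a]
  have hge : (M a a) ^ 2 ≤ M a a := by
    calc (M a a) ^ 2 ≤ ∑ k, (M a k) ^ 2 :=
          Finset.single_le_sum (f := fun k => (M a k)^2) (fun k _ => sq_nonneg _) (Finset.mem_univ a)
      _ = M a a := h2.symm
  rw [hdiag] at hge
  nlinarith [hge, Finset.sum_nonneg (fun i (_ : i ∈ Finset.univ) => sq_nonneg (P i a))]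

lemma filter_eq_map {N r : ℕ} (hr : r ≤ N) :
    Finset.univ.filter (fun j : Fin N => (j : ℕ) < r)
      = Finset.map (Fin.castLEEmb hr) Finset.univ := by
  ext j
  simp only [Finset.mem_filter, Finset.mem_univ, true_and, Finset.mem_map,
    Fin.castLEEmb, Function.Embedding.coeFn_mk]
  constructor
  · intro h; exact ⟨⟨j, h⟩, by ext; rfl⟩
  · rintro ⟨i, rfl⟩; exact i.2

lemma comb {N r : ℕ} (hr : r ≤ N) (σ d : Fin N → ℝ)
    (hσ0 : ∀ i, 0 ≤ σ i) (hσd : ∀ i j : Fin N, i ≤ j → σ j ≤ σ i)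
    (hd0 : ∀ j, 0 ≤ d j) (hd1 : ∀ j, d j ≤ 1)
    (hsum : ∑ j, d j ≤ (r : ℝ)) :
    ∑ j, σ j * d j ≤ ∑ j ∈ Finset.univ.filter (fun j : Fin N => (j : ℕ) < r), σ j := by
  set s : ℝ := if h : r < N then σ ⟨r, h⟩ else 0 with hs
  have hs0 : 0 ≤ s := by
    rw [hs]; split <;> [exact hσ0 _; rfl]
  have hs_le : ∀ j : Fin N, (j : ℕ) < r → s ≤ σ j := by
    intro j hj
    rw [hs]
    split
    · exact hσd j _ (le_of_lt hj)
    · exact hσ0 j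
  have hs_ge : ∀ j : Fin N, r ≤ (j : ℕ) → σ j ≤ s := by
    intro j hj
    have hrN : r < N := lt_of_le_of_lt hj j.2
    rw [hs, dif_pos hrN]
    exact hσd ⟨r, hrN⟩ j hj
  have hcard : (Finset.univ.filter (fun j : Fin N => (j : ℕ) < r)).card = r := by
    rw [filter_eq_map hr, Finset.card_map, Finset.card_univ, Fintype.card_fin]
  have key : ∑ j, σ j * d j = ∑ j, (σ j - s) * d j + s * ∑ j, d j := by
    rw [Finset.mul_sum, ← Finset.sum_add_distrib]
    apply Finset.sum_congr rfl; intro j _; ring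
  rw [key]
  have h1 : ∑ j, (σ j - s) * d j
      ≤ ∑ j ∈ Finset.univ.filter (fun j : Fin N => (j : ℕ) < r), (σ j - s) := by
    rw [← Finset.sum_filter_add_sum_filter_not Finset.univ (fun j : Fin N => (j : ℕ) < r)
      (fun j => (σ j - s) * d j)]
    have hA : ∑ j ∈ Finset.univ.filter (fun j : Fin N => (j : ℕ) < r), (σ j - s) * d j
        ≤ ∑ j ∈ Finset.univ.filter (fun j : Fin N => (j : ℕ) < r), (σ j - s) := by
      apply Finset.sum_le_sum
      intro j hj
      simp only [Finset.mem_filter] at hj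
      exact mul_le_of_le_one_right (by linarith [hs_le j hj.2]) (hd1 j)
    have hB : ∑ j ∈ Finset.univ.filter (fun j : Fin N => ¬(j : ℕ) < r), (σ j - s) * d j ≤ 0 := by
      apply Finset.sum_nonpos
      intro j hj
      simp only [Finset.mem_filter] at hj
      exact mul_nonpos_of_nonpos_of_nonneg (by linarith [hs_ge j (not_lt.mp hj.2)]) (hd0 j)
    linarith
  have h2 : s * ∑ j, d j ≤ s * r := mul_le_mul_of_nonneg_left hsum hs0
  have h3 : ∑ j ∈ Finset.univ.filter (fun j : Fin N => (j : ℕ) < r), (σ j - s)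
      = (∑ j ∈ Finset.univ.filter (fun j : Fin N => (j : ℕ) < r), σ j) - s * r := by
    rw [Finset.sum_sub_distrib, Finset.sum_const, hcard]
    ring
  linarith

lemma sum_col_sq_le {r m N : ℕ} (P : Matrix (Fin r) (Fin m) ℝ) (hP : P * Pᵀ = 1)
    (e : Fin N ↪ Fin m) :
    ∑ j : Fin N, ∑ i, P i (e j) ^ 2 ≤ (r : ℝ) := by
  have h1 : ∑ j : Fin N, ∑ i, P i (e j) ^ 2 ≤ ∑ a : Fin m, ∑ i, P i a ^ 2 := by
    rw [← Finset.sum_map Finset.univ e (fun a => ∑ i, P i a ^ 2)]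
    apply Finset.sum_le_sum_of_subset_of_nonneg (Finset.subset_univ _)
    intro a _ _; positivity
  have h2 : ∑ a : Fin m, ∑ i, P i a ^ 2 = (r : ℝ) := by
    have h3 : (P * Pᵀ).trace = (1 : Matrix (Fin r) (Fin r) ℝ).trace := by rw [hP]
    rw [Finset.sum_comm]
    simpa [trace, diag_apply, mul_apply, transpose_apply, sq] using h3
  linarith

lemma trace_form {m n r : ℕ} (σ : Fin (min m n) → ℝ)
    (U : Matrix (Fin m) (Fin m) ℝ) (V : Matrix (Fin n) (Fin n) ℝ)
    (A : Matrix (Fin r) (Fin m) ℝ) (B : Matrix (Fin r) (Fin n) ℝ) :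
    (A * (U * sigMat σ * Vᵀ) * Bᵀ).trace
      = ∑ j : Fin (min m n), σ j * ∑ i : Fin r,
          (A * U) i (Fin.castLE (min_le_left m n) j) * (B * V) i (Fin.castLE (min_le_right m n) j) := by
  rw [← trace_mul_sigMat σ (A * U) (B * V)]
  congr 1
  rw [Matrix.transpose_mul]
  simp only [Matrix.mul_assoc]
/-- Truncated nuclear norm: ‖X‖_r = ‖X‖_* − max { tr(AXBᵀ) : AAᵀ = I, BBᵀ = I },
with the maximum attained by the transposes of the first r singular vectors. -/
theorem truncated_nuclear_norm_eq {m n r : ℕ} (hr : r ≤ min m n)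
    (X : Matrix (Fin m) (Fin n) ℝ)
    (U : Matrix (Fin m) (Fin m) ℝ) (V : Matrix (Fin n) (Fin n) ℝ)
    (σ : Fin (min m n) → ℝ)
    (hU : U * Uᵀ = 1) (hU' : Uᵀ * U = 1)
    (hV : V * Vᵀ = 1) (hV' : Vᵀ * V = 1)
    (hσ0 : ∀ i, 0 ≤ σ i) (hσd : ∀ i j, i ≤ j → σ j ≤ σ i)
    (hX : X = U * sigMat σ * Vᵀ) :
    -- the attaining pair A₀, B₀: transposes of the first r columns of U and V
    let A₀ : Matrix (Fin r) (Fin m) ℝ :=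
      fun i j => U j (Fin.castLE (hr.trans (min_le_left m n)) i)
    let B₀ : Matrix (Fin r) (Fin n) ℝ :=
      fun i j => V j (Fin.castLE (hr.trans (min_le_right m n)) i)
    (A₀ * X * B₀ᵀ).trace = ∑ i : Fin r, σ (Fin.castLE hr i) ∧
    IsGreatest
      {t : ℝ | ∃ A : Matrix (Fin r) (Fin m) ℝ, ∃ B : Matrix (Fin r) (Fin n) ℝ,
        A * Aᵀ = 1 ∧ B * Bᵀ = 1 ∧ t = (A * X * Bᵀ).trace}
      ((A₀ * X * B₀ᵀ).trace) ∧
    (∑ j ∈ Finset.univ.filter (fun j : Fin (min m n) => r ≤ (j : ℕ)), σ j)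
      = (∑ j : Fin (min m n), σ j) - (A₀ * X * B₀ᵀ).trace := by
  intro A₀ B₀
  subst hX
  -- entries of A₀ * U and B₀ * V
  have hAU : ∀ (i : Fin r) (k : Fin m),
      (A₀ * U) i k = (1 : Matrix (Fin m) (Fin m) ℝ) (Fin.castLE (hr.trans (min_le_left m n)) i) k := by
    intro i k
    rw [← hU']
    simp [mul_apply, A₀, transpose_apply]; rfl
  have hBV : ∀ (i : Fin r) (k : Fin n),
      (B₀ * V) i k = (1 : Matrix (Fin n) (Fin n) ℝ) (Fin.castLE (hr.trans (min_le_right m n)) i) k := by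
    intro i k
    rw [← hV']
    simp [mul_apply, B₀, transpose_apply]; rfl
  -- the coefficient c_j for the optimal pair
  have hc : ∀ j : Fin (min m n),
      (∑ i : Fin r, (A₀ * U) i (Fin.castLE (min_le_left m n) j)
        * (B₀ * V) i (Fin.castLE (min_le_right m n) j))
      = if (j : ℕ) < r then 1 else 0 := by
    intro j
    by_cases hjr : (j : ℕ) < r
    · rw [if_pos hjr, Finset.sum_eq_single (⟨(j : ℕ), hjr⟩ : Fin r)]
      · rw [hAU, hBV]
        rw [show (Fin.castLE (hr.trans (min_le_left m n)) ⟨(j:ℕ), hjr⟩)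
            = Fin.castLE (min_le_left m n) j from by ext; rfl]
        rw [show (Fin.castLE (hr.trans (min_le_right m n)) ⟨(j:ℕ), hjr⟩)
            = Fin.castLE (min_le_right m n) j from by ext; rfl]
        rw [one_apply_eq, one_apply_eq, mul_one]
      · intro i _ hi
        rw [hAU, hBV, one_apply_ne, zero_mul]
        intro hcontra
        apply hi; ext
        simpa [Fin.ext_iff] using hcontra
      · simp
    · rw [if_neg hjr]
      apply Finset.sum_eq_zero
      intro i _
      rw [hAU, one_apply_ne, zero_mul]
      intro hcontra
      apply hjr
      have : (i : ℕ) = (j : ℕ) := by simpa [Fin.ext_iff] using hcontra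
      rw [← this]; exact i.2
  -- the trace of the optimal pair
  have htr : (A₀ * (U * sigMat σ * Vᵀ) * B₀ᵀ).trace
      = ∑ j ∈ Finset.univ.filter (fun j : Fin (min m n) => (j : ℕ) < r), σ j := by
    rw [trace_form, Finset.sum_filter]
    apply Finset.sum_congr rfl
    intro j _
    rw [hc j, mul_ite, mul_one, mul_zero]
  have hgoal1 : (A₀ * (U * sigMat σ * Vᵀ) * B₀ᵀ).trace = ∑ i : Fin r, σ (Fin.castLE hr i) := by
    rw [htr, filter_eq_map hr, Finset.sum_map]
    rfl
  have hmap : ∑ j ∈ Finset.univ.filter (fun j : Fin (min m n) => (j : ℕ) < r), σ j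
      = ∑ i : Fin r, σ (Fin.castLE hr i) := by
    rw [filter_eq_map hr, Finset.sum_map]; rfl
  refine ⟨hgoal1, ⟨?_, ?_⟩, ?_⟩
  · -- membership
    refine ⟨A₀, B₀, ?_, ?_, rfl⟩
    · ext i i'
      rw [show (A₀ * A₀ᵀ) i i' = (Uᵀ * U) (Fin.castLE (hr.trans (min_le_left m n)) i)
          (Fin.castLE (hr.trans (min_le_left m n)) i') from by
        simp [mul_apply, A₀, transpose_apply]; rfl]
      rw [hU']
      by_cases h : i = i'
      · subst h; simp
      · rw [one_apply_ne, one_apply_ne h]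
        intro hcontra; apply h; ext; simpa [Fin.ext_iff] using hcontra
    · ext i i'
      rw [show (B₀ * B₀ᵀ) i i' = (Vᵀ * V) (Fin.castLE (hr.trans (min_le_right m n)) i)
          (Fin.castLE (hr.trans (min_le_right m n)) i') from by
        simp [mul_apply, B₀, transpose_apply]; rfl]
      rw [hV']
      by_cases h : i = i'
      · subst h; simp
      · rw [one_apply_ne, one_apply_ne h]
        intro hcontra; apply h; ext; simpa [Fin.ext_iff] using hcontra
  · -- upper bound
    rintro t ⟨A, B, hA, hB, rfl⟩
    rw [trace_form, hgoal1, ← hmap]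
    set P := A * U with hPdef
    set Q := B * V with hQdef
    have hP : P * Pᵀ = 1 := by
      rw [hPdef, Matrix.transpose_mul, Matrix.mul_assoc, ← Matrix.mul_assoc U, hU,
        Matrix.one_mul, hA]
    have hQ : Q * Qᵀ = 1 := by
      rw [hQdef, Matrix.transpose_mul, Matrix.mul_assoc, ← Matrix.mul_assoc V, hV,
        Matrix.one_mul, hB]
    set d : Fin (min m n) → ℝ := fun j =>
      ((∑ i, P i (Fin.castLE (min_le_left m n) j) ^ 2)
        + (∑ i, Q i (Fin.castLE (min_le_right m n) j) ^ 2)) / 2 with hddef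
    have hd1 : ∀ j, d j ≤ 1 := by
      intro j
      have h1 := col_sq_bound P hP (Fin.castLE (min_le_left m n) j)
      have h2 := col_sq_bound Q hQ (Fin.castLE (min_le_right m n) j)
      rw [hddef]; dsimp only; linarith
    have hd0 : ∀ j, 0 ≤ d j := by
      intro j; rw [hddef]; dsimp only; positivity
    have hdsum : ∑ j, d j ≤ (r : ℝ) := by
      have h1 := sum_col_sq_le P hP (Fin.castLEEmb (min_le_left m n))
      have h2 := sum_col_sq_le Q hQ (Fin.castLEEmb (min_le_right m n))
      simp only [Fin.castLEEmb, Function.Embedding.coeFn_mk] at h1 h2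
      rw [hddef]
      rw [show ∑ j : Fin (min m n), ((∑ i, P i (Fin.castLE (min_le_left m n) j) ^ 2)
          + (∑ i, Q i (Fin.castLE (min_le_right m n) j) ^ 2)) / 2
        = ((∑ j : Fin (min m n), ∑ i, P i (Fin.castLE (min_le_left m n) j) ^ 2)
          + (∑ j : Fin (min m n), ∑ i, Q i (Fin.castLE (min_le_right m n) j) ^ 2)) / 2 from by
        rw [← Finset.sum_div, Finset.sum_add_distrib]]
      linarith
    have hcd : ∀ j : Fin (min m n),
        σ j * (∑ i, P i (Fin.castLE (min_le_left m n) j) * Q i (Fin.castLE (min_le_right m n) j))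
          ≤ σ j * d j := by
      intro j
      apply mul_le_mul_of_nonneg_left _ (hσ0 j)
      rw [hddef]; dsimp only
      rw [div_eq_inv_mul, ← Finset.sum_add_distrib, Finset.mul_sum]
      apply Finset.sum_le_sum
      intro i _
      nlinarith [sq_nonneg (P i (Fin.castLE (min_le_left m n) j)
        - Q i (Fin.castLE (min_le_right m n) j))]
    calc ∑ j : Fin (min m n), σ j * (∑ i, P i (Fin.castLE (min_le_left m n) j)
          * Q i (Fin.castLE (min_le_right m n) j))
        ≤ ∑ j : Fin (min m n), σ j * d j := Finset.sum_le_sum fun j _ => hcd j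
      _ ≤ ∑ j ∈ Finset.univ.filter (fun j : Fin (min m n) => (j : ℕ) < r), σ j :=
          comb hr σ d hσ0 hσd hd0 hd1 hdsum
  · -- arithmetic
    rw [hgoal1, ← hmap]
    have hsplit := Finset.sum_filter_add_sum_filter_not Finset.univ
      (fun j : Fin (min m n) => (j : ℕ) < r) σ
    have hfeq : Finset.univ.filter (fun j : Fin (min m n) => ¬(j : ℕ) < r)
        = Finset.univ.filter (fun j : Fin (min m n) => r ≤ (j : ℕ)) := by
      apply Finset.filter_congr
      intro j _
      simp [not_lt]
    rw [hfeq] at hsplit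
    linarith
end

section
/- For any matrix X ∈ ℝ^{m×n} and any matrices A ∈ ℝ^{r×m}, B ∈ ℝ^{r×n} with A Aᵀ = I_r and B Bᵀ = I_r, one has tr(A X Bᵀ) ≤ Σ_{j=1}^r σ_j(X), the sum of the r largest singular values of X. -/
open Matrix

lemma sum_le_of_castLE {N M : ℕ} (h : N ≤ M) (f : Fin M → ℝ) (hf : ∀ k, 0 ≤ f k) :
    ∑ l : Fin N, f (Fin.castLE h l) ≤ ∑ k : Fin M, f k := by
  classical
  have : ∑ l : Fin N, f (Fin.castLE h l)
      = ∑ k ∈ Finset.univ.map (Fin.castLEEmb h), f k := by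
    rw [Finset.sum_map]; rfl
  rw [this]
  exact Finset.sum_le_sum_of_subset_of_nonneg (Finset.subset_univ _)
    (fun k _ _ => hf k)

lemma sum_dite_castLE {N M : ℕ} (h : N ≤ M) (g : ∀ k : Fin M, (k:ℕ) < N → ℝ) :
    ∑ k : Fin M, (if hk : (k:ℕ) < N then g k hk else 0)
      = ∑ l : Fin N, g (Fin.castLE h l) l.isLt := by
  classical
  rw [show (∑ l : Fin N, g (Fin.castLE h l) l.isLt)
      = ∑ k ∈ Finset.univ.map (Fin.castLEEmb h),
          (if hk : (k:ℕ) < N then g k hk else 0) by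
    rw [Finset.sum_map]
    refine Finset.sum_congr rfl fun l _ => ?_
    rw [dif_pos]
    · rfl]
  refine (Finset.sum_subset (Finset.subset_univ _) fun k _ hk => ?_).symm
  rw [dif_neg]
  intro hkN
  exact hk (Finset.mem_map.mpr ⟨⟨k, hkN⟩, Finset.mem_univ _, rfl⟩)

lemma comb_s8 {N r : ℕ} (hr : r ≤ N) (σ t : Fin N → ℝ)
    (hσ0 : ∀ i, 0 ≤ σ i) (hσd : ∀ i j : Fin N, i ≤ j → σ j ≤ σ i)
    (ht0 : ∀ l, 0 ≤ t l) (ht1 : ∀ l, t l ≤ 1) (hts : ∑ l, t l ≤ (r : ℝ)) :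
    ∑ l, σ l * t l ≤ ∑ i : Fin r, σ (Fin.castLE hr i) := by
  classical
  rcases Nat.eq_zero_or_pos r with h0 | hpos
  · subst h0
    simp only [Finset.univ_eq_empty, Finset.sum_empty]
    have hteq : ∀ l ∈ Finset.univ, t l = 0 := by
      intro l _
      have h1 : ∑ l, t l = 0 :=
        le_antisymm (by simpa using hts) (Finset.sum_nonneg fun l _ => ht0 l)
      exact (Finset.sum_eq_zero_iff_of_nonneg (fun l _ => ht0 l)).mp h1 l (Finset.mem_univ _)
    calc ∑ l, σ l * t l = 0 := by
          refine Finset.sum_eq_zero fun l hl => by rw [hteq l hl, mul_zero]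
      _ ≤ 0 := le_rfl
  · have hrN : r - 1 < N := lt_of_lt_of_le (Nat.sub_lt hpos one_pos) hr
    set s : ℝ := σ ⟨r - 1, hrN⟩ with hs
    have hs0 : 0 ≤ s := hσ0 _
    have hpt : ∀ l : Fin N, σ l * t l ≤ s * t l + max (σ l - s) 0 := by
      intro l
      rcases le_or_gt s (σ l) with h | h
      · have : max (σ l - s) 0 = σ l - s := max_eq_left (by linarith)
        rw [this]
        nlinarith [ht1 l, ht0 l]
      · have : max (σ l - s) 0 = 0 := max_eq_right (by linarith)
        rw [this]
        nlinarith [ht0 l]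
    have hmax : ∀ l : Fin N, max (σ l - s) 0
        = if hk : (l:ℕ) < r then σ l - s else 0 := by
      intro l
      by_cases hk : (l:ℕ) < r
      · rw [dif_pos hk]
        refine max_eq_left ?_
        have : σ ⟨r-1, hrN⟩ ≤ σ l := hσd l ⟨r-1, hrN⟩ (by
          simp [Fin.le_def]; omega)
        linarith
      · rw [dif_neg hk]
        refine max_eq_right ?_
        have : σ l ≤ σ ⟨r-1, hrN⟩ := hσd ⟨r-1, hrN⟩ l (by
          simp [Fin.le_def]; omega)
        linarith
    have hsum_max : ∑ l, max (σ l - s) 0 = ∑ i : Fin r, (σ (Fin.castLE hr i) - s) := by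
      rw [show (∑ l, max (σ l - s) 0)
          = ∑ l : Fin N, (if hk : (l:ℕ) < r then σ l - s else 0) from
        Finset.sum_congr rfl fun l _ => hmax l]
      exact sum_dite_castLE hr (fun l _ => σ l - s)
    calc ∑ l, σ l * t l ≤ ∑ l, (s * t l + max (σ l - s) 0) :=
          Finset.sum_le_sum fun l _ => hpt l
      _ = s * (∑ l, t l) + ∑ l, max (σ l - s) 0 := by
          rw [Finset.sum_add_distrib, Finset.mul_sum]
      _ ≤ s * r + ∑ i : Fin r, (σ (Fin.castLE hr i) - s) := by
          rw [hsum_max]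
          have := mul_le_mul_of_nonneg_left hts hs0
          linarith
      _ = ∑ i : Fin r, σ (Fin.castLE hr i) := by
          rw [Finset.sum_sub_distrib]
          simp [Finset.card_univ, mul_comm]

lemma trace_mul_sigMat_mul {m n r : ℕ} (σ : Fin (min m n) → ℝ)
    (P : Matrix (Fin r) (Fin m) ℝ) (Q : Matrix (Fin r) (Fin n) ℝ) :
    (P * sigMat σ * Qᵀ).trace
      = ∑ l : Fin (min m n), σ l *
          ∑ i, P i (Fin.castLE (min_le_left m n) l) * Q i (Fin.castLE (min_le_right m n) l) := by
  classical
  have expand : (P * sigMat σ * Qᵀ).trace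
      = ∑ k : Fin m, ∑ j : Fin n, sigMat σ k j * ∑ i, P i k * Q i j := by
    calc (P * sigMat σ * Qᵀ).trace
        = ∑ i : Fin r, ∑ j : Fin n, ∑ k : Fin m, P i k * sigMat σ k j * Q i j := by
          simp only [Matrix.trace, Matrix.diag, Matrix.mul_apply, Matrix.transpose_apply,
            Finset.sum_mul]
      _ = ∑ j : Fin n, ∑ i : Fin r, ∑ k : Fin m, P i k * sigMat σ k j * Q i j :=
          Finset.sum_comm
      _ = ∑ j : Fin n, ∑ k : Fin m, ∑ i : Fin r, P i k * sigMat σ k j * Q i j :=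
          Finset.sum_congr rfl fun j _ => Finset.sum_comm
      _ = ∑ k : Fin m, ∑ j : Fin n, ∑ i : Fin r, P i k * sigMat σ k j * Q i j :=
          Finset.sum_comm
      _ = ∑ k : Fin m, ∑ j : Fin n, sigMat σ k j * ∑ i, P i k * Q i j := by
          refine Finset.sum_congr rfl fun k _ => Finset.sum_congr rfl fun j _ => ?_
          rw [Finset.mul_sum]
          exact Finset.sum_congr rfl fun i _ => by ring
  rw [expand]
  have inner : ∀ k : Fin m, (∑ j : Fin n, sigMat σ k j * ∑ i, P i k * Q i j)
      = if hk : (k:ℕ) < min m n then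
          σ ⟨k, hk⟩ * ∑ i, P i k * Q i ⟨k, lt_of_lt_of_le hk (min_le_right m n)⟩ else 0 := by
    intro k
    by_cases hk : (k:ℕ) < min m n
    · rw [dif_pos hk]
      rw [Finset.sum_eq_single (⟨(k:ℕ), lt_of_lt_of_le hk (min_le_right m n)⟩ : Fin n)]
      · congr 1
        exact dif_pos ⟨rfl, hk⟩
      · intro j _ hj
        have hcond : ¬ ((k:ℕ) = (j:ℕ) ∧ (k:ℕ) < min m n) := by
          rintro ⟨h1, -⟩
          exact hj (by apply Fin.ext; exact h1.symm)
        have hz : sigMat σ k j = 0 := by simp only [sigMat]; rw [dif_neg hcond]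
        rw [hz, zero_mul]
      · intro h; exact absurd (Finset.mem_univ _) h
    · rw [dif_neg hk]
      refine Finset.sum_eq_zero fun j _ => ?_
      have hcond : ¬ ((k:ℕ) = (j:ℕ) ∧ (k:ℕ) < min m n) := fun h => hk h.2
      have hz : sigMat σ k j = 0 := by simp only [sigMat]; rw [dif_neg hcond]
      rw [hz, zero_mul]
  rw [Finset.sum_congr rfl fun k _ => inner k]
  rw [sum_dite_castLE (min_le_left m n)
    (fun k hk => σ ⟨k, hk⟩ * ∑ i, P i k * Q i ⟨k, lt_of_lt_of_le hk (min_le_right m n)⟩)]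
  refine Finset.sum_congr rfl fun l _ => ?_
  congr 1

lemma proj_diag_apply {r M : ℕ} (P : Matrix (Fin r) (Fin M) ℝ) (k : Fin M) :
    (Pᵀ * P) k k = ∑ i, P i k * P i k := by
  simp [Matrix.mul_apply, Matrix.transpose_apply]

lemma proj_diag_nonneg {r M : ℕ} (P : Matrix (Fin r) (Fin M) ℝ) (k : Fin M) :
    0 ≤ (Pᵀ * P) k k := by
  rw [proj_diag_apply]
  exact Finset.sum_nonneg fun i _ => mul_self_nonneg _

lemma proj_diag_le_one {r M : ℕ} (P : Matrix (Fin r) (Fin M) ℝ)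
    (hP : P * Pᵀ = 1) (k : Fin M) : (Pᵀ * P) k k ≤ 1 := by
  set G := Pᵀ * P with hG
  have hidem : G * G = G := by
    rw [hG]
    calc Pᵀ * P * (Pᵀ * P) = Pᵀ * (P * Pᵀ) * P := by
          simp only [Matrix.mul_assoc]
      _ = Pᵀ * P := by rw [hP, Matrix.mul_one]
  have hsym : Gᵀ = G := by
    rw [hG, Matrix.transpose_mul, Matrix.transpose_transpose]
  have hkk : G k k = ∑ j, (G k j) ^ 2 := by
    conv_lhs => rw [← hidem]
    rw [Matrix.mul_apply]
    refine Finset.sum_congr rfl fun j _ => ?_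
    have : G j k = G k j := by
      conv_lhs => rw [← hsym]
      rfl
    rw [this]; ring
  have h1 : (G k k) ^ 2 ≤ ∑ j, (G k j) ^ 2 :=
    Finset.single_le_sum (fun j _ => sq_nonneg (G k j)) (Finset.mem_univ k)
  rw [← hkk] at h1
  nlinarith [h1]

lemma proj_diag_sum {r M : ℕ} (P : Matrix (Fin r) (Fin M) ℝ)
    (hP : P * Pᵀ = 1) : ∑ k, (Pᵀ * P) k k = (r : ℝ) := by
  have : ∑ k, (Pᵀ * P) k k = (Pᵀ * P).trace := rfl
  rw [this, Matrix.trace_mul_comm, hP, Matrix.trace_one]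
  simp

/-- Von Neumann trace inequality for partial isometries: if AAᵀ = I and BBᵀ = I,
then tr(AXBᵀ) ≤ Σ_{j=1}^r σ_j(X), the sum of the r largest singular values. -/
theorem trace_le_sum_largest_singular_values {m n r : ℕ} (hr : r ≤ min m n)
    (X : Matrix (Fin m) (Fin n) ℝ)
    (U : Matrix (Fin m) (Fin m) ℝ) (V : Matrix (Fin n) (Fin n) ℝ)
    (σ : Fin (min m n) → ℝ)
    (hU : U * Uᵀ = 1) (hU' : Uᵀ * U = 1)
    (hV : V * Vᵀ = 1) (hV' : Vᵀ * V = 1)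
    (hσ0 : ∀ i, 0 ≤ σ i) (hσd : ∀ i j, i ≤ j → σ j ≤ σ i)
    (hX : X = U * sigMat σ * Vᵀ)
    (A : Matrix (Fin r) (Fin m) ℝ) (B : Matrix (Fin r) (Fin n) ℝ)
    (hA : A * Aᵀ = 1) (hB : B * Bᵀ = 1) :
    (A * X * Bᵀ).trace ≤ ∑ i : Fin r, σ (Fin.castLE hr i) := by
  classical
  set P := A * U with hPdef
  set Q := B * V with hQdef
  have hPP : P * Pᵀ = 1 := by
    rw [hPdef, Matrix.transpose_mul]
    calc A * U * (Uᵀ * Aᵀ) = A * (U * Uᵀ) * Aᵀ := by simp only [Matrix.mul_assoc]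
      _ = 1 := by rw [hU, Matrix.mul_one, hA]
  have hQQ : Q * Qᵀ = 1 := by
    rw [hQdef, Matrix.transpose_mul]
    calc B * V * (Vᵀ * Bᵀ) = B * (V * Vᵀ) * Bᵀ := by simp only [Matrix.mul_assoc]
      _ = 1 := by rw [hV, Matrix.mul_one, hB]
  have hAXB : A * X * Bᵀ = P * sigMat σ * Qᵀ := by
    rw [hX, hPdef, hQdef, Matrix.transpose_mul]
    simp only [Matrix.mul_assoc]
  rw [hAXB, trace_mul_sigMat_mul]
  set e1 : Fin (min m n) → Fin m := Fin.castLE (min_le_left m n) with he1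
  set e2 : Fin (min m n) → Fin n := Fin.castLE (min_le_right m n) with he2
  set t : Fin (min m n) → ℝ :=
    fun l => ((Pᵀ * P) (e1 l) (e1 l) + (Qᵀ * Q) (e2 l) (e2 l)) / 2 with ht
  have hct : ∀ l, (∑ i, P i (e1 l) * Q i (e2 l)) ≤ t l := by
    intro l
    rw [ht]
    simp only
    rw [proj_diag_apply, proj_diag_apply]
    calc ∑ i, P i (e1 l) * Q i (e2 l)
        ≤ ∑ i, (P i (e1 l) * P i (e1 l) + Q i (e2 l) * Q i (e2 l)) / 2 :=
          Finset.sum_le_sum fun i _ => by nlinarith [sq_nonneg (P i (e1 l) - Q i (e2 l))]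
      _ = (∑ i, P i (e1 l) * P i (e1 l) + ∑ i, Q i (e2 l) * Q i (e2 l)) / 2 := by
          rw [← Finset.sum_div, Finset.sum_add_distrib]
  have hstep : ∀ l, σ l * (∑ i, P i (e1 l) * Q i (e2 l)) ≤ σ l * t l :=
    fun l => mul_le_mul_of_nonneg_left (hct l) (hσ0 l)
  have ht0 : ∀ l, 0 ≤ t l := by
    intro l
    rw [ht]
    have := proj_diag_nonneg P (e1 l)
    have := proj_diag_nonneg Q (e2 l)
    simp only
    linarith
  have ht1 : ∀ l, t l ≤ 1 := by
    intro l
    rw [ht]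
    have := proj_diag_le_one P hPP (e1 l)
    have := proj_diag_le_one Q hQQ (e2 l)
    simp only
    linarith
  have hts : ∑ l, t l ≤ (r : ℝ) := by
    have hp : ∑ l, (Pᵀ * P) (e1 l) (e1 l) ≤ (r : ℝ) := by
      calc ∑ l, (Pᵀ * P) (e1 l) (e1 l) ≤ ∑ k, (Pᵀ * P) k k :=
            sum_le_of_castLE (min_le_left m n) _ (proj_diag_nonneg P)
        _ = (r : ℝ) := proj_diag_sum P hPP
    have hq : ∑ l, (Qᵀ * Q) (e2 l) (e2 l) ≤ (r : ℝ) := by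
      calc ∑ l, (Qᵀ * Q) (e2 l) (e2 l) ≤ ∑ k, (Qᵀ * Q) k k :=
            sum_le_of_castLE (min_le_right m n) _ (proj_diag_nonneg Q)
        _ = (r : ℝ) := proj_diag_sum Q hQQ
    rw [ht]
    simp only
    have : ∑ l, ((Pᵀ * P) (e1 l) (e1 l) + (Qᵀ * Q) (e2 l) (e2 l)) / 2
        = (∑ l, (Pᵀ * P) (e1 l) (e1 l)) / 2 + (∑ l, (Qᵀ * Q) (e2 l) (e2 l)) / 2 := by
      rw [← Finset.sum_div, Finset.sum_add_distrib, add_div]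
    rw [this]
    linarith
  calc ∑ l, σ l * ∑ i, P i (e1 l) * Q i (e2 l) ≤ ∑ l, σ l * t l :=
        Finset.sum_le_sum fun l _ => hstep l
    _ ≤ ∑ i : Fin r, σ (Fin.castLE hr i) := comb_s8 hr σ t hσ0 hσd ht0 ht1 hts
end

section
/- For τ > 0 and a matrix W ∈ ℝ^{m×n}, the singular value thresholding operator D_τ(W) := U diag(max(σ_i − τ, 0)) Vᵀ (where W = U diag(σ) Vᵀ is an SVD of W) is the unique minimizer of the function X ↦ τ‖X‖_* + (1/2)‖X − W‖_F², where ‖·‖_* is the nuclear norm and ‖·‖_F the Frobenius norm. -/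
open Matrix

/-- The nuclear norm of a real matrix: the sum of its singular values,
i.e. of the square roots of the eigenvalues of XᴴX. -/
noncomputable def nuclearNorm {m n : ℕ} (X : Matrix (Fin m) (Fin n) ℝ) : ℝ :=
  ∑ i, Real.sqrt ((Matrix.isHermitian_conjTranspose_mul_self X).eigenvalues i)

/-- Squared Frobenius norm of a real matrix. -/
def frobSq {m n : ℕ} (X : Matrix (Fin m) (Fin n) ℝ) : ℝ :=
  ∑ i, ∑ j, (X i j) ^ 2

lemma eig_congr {k : ℕ} {A B : Matrix (Fin k) (Fin k) ℝ} (h : A = B) (hA : A.IsHermitian)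
    (hB : B.IsHermitian) : hA.eigenvalues = hB.eigenvalues := by
  subst h; rfl

noncomputable def Matrix.PosSemidef.sqrt {k : ℕ} {A : Matrix (Fin k) (Fin k) ℝ}
    (hA : PosSemidef A) : Matrix (Fin k) (Fin k) ℝ :=
  (hA.1.eigenvectorUnitary : Matrix (Fin k) (Fin k) ℝ) *
    diagonal (fun i => Real.sqrt (hA.1.eigenvalues i)) *
    star (hA.1.eigenvectorUnitary : Matrix (Fin k) (Fin k) ℝ)

lemma Matrix.PosSemidef.posSemidef_sqrt {k : ℕ} {A : Matrix (Fin k) (Fin k) ℝ}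
    (hA : PosSemidef A) : PosSemidef hA.sqrt := by
  have hD : PosSemidef (diagonal (fun i => Real.sqrt (hA.1.eigenvalues i))) :=
    posSemidef_diagonal_iff.mpr fun i => Real.sqrt_nonneg _
  have := hD.mul_mul_conjTranspose_same (hA.1.eigenvectorUnitary : Matrix (Fin k) (Fin k) ℝ)
  rw [← Matrix.star_eq_conjTranspose] at this
  exact this

lemma Matrix.PosSemidef.sqrt_mul_self {k : ℕ} {A : Matrix (Fin k) (Fin k) ℝ}
    (hA : PosSemidef A) : hA.sqrt * hA.sqrt = A := by
  have hs := hA.1.spectral_theorem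
  rw [Unitary.conjStarAlgAut_apply] at hs
  have hUU : star (hA.1.eigenvectorUnitary : Matrix (Fin k) (Fin k) ℝ) *
      (hA.1.eigenvectorUnitary : Matrix (Fin k) (Fin k) ℝ) = 1 :=
    UnitaryGroup.star_mul_self _
  have hdd : diagonal (fun i => Real.sqrt (hA.1.eigenvalues i)) *
      diagonal (fun i => Real.sqrt (hA.1.eigenvalues i))
      = diagonal (RCLike.ofReal ∘ hA.1.eigenvalues) := by
    rw [diagonal_mul_diagonal]
    refine congrArg diagonal (funext fun i => ?_)
    simp [Real.mul_self_sqrt (hA.eigenvalues_nonneg i)]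
  unfold Matrix.PosSemidef.sqrt
  conv_rhs => rw [hs]
  simp only [Matrix.mul_assoc]
  rw [← Matrix.mul_assoc (star _) _ (diagonal _ * _), hUU, Matrix.one_mul,
    ← Matrix.mul_assoc (diagonal _) (diagonal _), hdd]

open scoped MatrixOrder in
lemma Matrix.PosSemidef.eq_sqrt_of_sq_eq {k : ℕ} {A B : Matrix (Fin k) (Fin k) ℝ}
    (hB : PosSemidef B) (hA : PosSemidef A) (h : B ^ 2 = A) : B = hA.sqrt := by
  have h1 : CFC.sqrt A = B := CFC.sqrt_unique (by rw [← h, pow_two]) hB.nonneg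
  have h2 : CFC.sqrt A = hA.sqrt := CFC.sqrt_unique hA.sqrt_mul_self hA.posSemidef_sqrt.nonneg
  rw [← h1, h2]

lemma psdT {m n : ℕ} (X : Matrix (Fin m) (Fin n) ℝ) : PosSemidef (Xᵀ * X) := by
  have := posSemidef_conjTranspose_mul_self X
  rwa [conjTranspose_eq_transpose_of_trivial] at this

lemma trace_sqrt {k : ℕ} {A : Matrix (Fin k) (Fin k) ℝ} (hA : PosSemidef A) :
    hA.sqrt.trace = ∑ i, Real.sqrt (hA.1.eigenvalues i) := by
  rw [Matrix.PosSemidef.sqrt, Matrix.trace_mul_cycle,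
    Matrix.UnitaryGroup.star_mul_self, one_mul, trace_diagonal]

lemma nuclearNorm_eq_trace_sqrt {m n : ℕ} (X : Matrix (Fin m) (Fin n) ℝ) :
    nuclearNorm X = (psdT X).sqrt.trace := by
  rw [trace_sqrt]; unfold nuclearNorm
  rw [eig_congr (by rw [conjTranspose_eq_transpose_of_trivial])
    (isHermitian_conjTranspose_mul_self X) (psdT X).1]

lemma nuclearNorm_conj {m n : ℕ} (P : Matrix (Fin m) (Fin m) ℝ) (Q : Matrix (Fin n) (Fin n) ℝ)
    (hP : Pᵀ * P = 1) (hQ : Qᵀ * Q = 1) (hQ2 : Q * Qᵀ = 1) (A : Matrix (Fin m) (Fin n) ℝ) :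
    nuclearNorm (P * A * Qᵀ) = nuclearNorm A := by
  have hM : (P * A * Qᵀ)ᵀ * (P * A * Qᵀ) = Q * ((Aᵀ * A) * Qᵀ) := by
    have h1 : Pᵀ * (P * (A * Qᵀ)) = A * Qᵀ := by rw [← Matrix.mul_assoc, hP, Matrix.one_mul]
    simp only [transpose_mul, transpose_transpose, Matrix.mul_assoc, h1]
  have hS : PosSemidef (Q * (psdT A).sqrt * Qᵀ) := by
    have := (psdT A).posSemidef_sqrt.mul_mul_conjTranspose_same Q
    rwa [conjTranspose_eq_transpose_of_trivial] at this
  have hsq : (Q * (psdT A).sqrt * Qᵀ) ^ 2 = (P * A * Qᵀ)ᵀ * (P * A * Qᵀ) := by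
    rw [hM, pow_two]
    have h2 : Qᵀ * (Q * ((psdT A).sqrt * Qᵀ)) = (psdT A).sqrt * Qᵀ := by
      rw [← Matrix.mul_assoc, hQ, Matrix.one_mul]
    calc Q * (psdT A).sqrt * Qᵀ * (Q * (psdT A).sqrt * Qᵀ)
        = Q * ((psdT A).sqrt * (Qᵀ * (Q * ((psdT A).sqrt * Qᵀ)))) := by
          simp only [Matrix.mul_assoc]
      _ = Q * ((psdT A).sqrt * ((psdT A).sqrt * Qᵀ)) := by rw [h2]
      _ = Q * ((Aᵀ * A) * Qᵀ) := by
          rw [← Matrix.mul_assoc ((psdT A).sqrt), (psdT A).sqrt_mul_self]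
  have heq : Q * (psdT A).sqrt * Qᵀ = (psdT (P * A * Qᵀ)).sqrt :=
    hS.eq_sqrt_of_sq_eq _ hsq
  rw [nuclearNorm_eq_trace_sqrt, nuclearNorm_eq_trace_sqrt, ← heq,
    Matrix.trace_mul_cycle, hQ, Matrix.one_mul]

lemma sum_dite_min {m n : ℕ} (f : Fin (min m n) → ℝ) :
    ∑ j : Fin n, (if h : (j : ℕ) < min m n then f ⟨j, h⟩ else 0) = ∑ i, f i := by
  set f' : ℕ → ℝ := fun j => if h : j < min m n then f ⟨j, h⟩ else 0 with hf'
  have h1 : ∑ j : Fin n, (if h : (j : ℕ) < min m n then f ⟨j, h⟩ else 0)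
      = ∑ j ∈ Finset.range n, f' j := Fin.sum_univ_eq_sum_range f' n
  have h2 : ∑ i : Fin (min m n), f i = ∑ j ∈ Finset.range (min m n), f' j := by
    rw [show ∑ i : Fin (min m n), f i = ∑ i : Fin (min m n), f' i from
      Finset.sum_congr rfl fun i _ => by have h := lt_min_iff.mp i.isLt; simp [hf', h.1, h.2]]
    exact Fin.sum_univ_eq_sum_range f' (min m n)
  rw [h1, h2]
  refine (Finset.sum_subset (Finset.range_subset_range.mpr (min_le_right m n)) ?_).symm
  intro j _ hj
  rw [hf']
  simp only []
  rw [dif_neg (by simpa using hj)]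

lemma sigT_mul_sig {m n : ℕ} (a b : Fin (min m n) → ℝ) :
    (sigMat a)ᵀ * sigMat b
      = diagonal (fun j : Fin n =>
          if h : (j : ℕ) < min m n then a ⟨j, h⟩ * b ⟨j, h⟩ else 0) := by
  ext j j'
  rw [Matrix.mul_apply]
  by_cases h : (j : ℕ) < min m n ∧ j = j'
  · obtain ⟨h1, rfl⟩ := h
    rw [Finset.sum_eq_single (⟨(j : ℕ), lt_of_lt_of_le h1 (min_le_left m n)⟩ : Fin m)]
    · rw [diagonal_apply_eq, dif_pos h1]
      simp [sigMat, transpose_apply, h1]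
    · intro i _ hne
      have hv : (i : ℕ) ≠ (j : ℕ) := fun hc => hne (Fin.ext hc)
      simp [sigMat, transpose_apply, hv]
    · simp
  · have hz : ∀ i : Fin m, (sigMat a)ᵀ j i * sigMat b i j' = 0 := by
      intro i
      simp only [sigMat, transpose_apply]
      split_ifs with h1 h2
      · exact absurd ⟨h1.1 ▸ h1.2, Fin.ext (h1.1.symm.trans h2.1)⟩ h
      all_goals simp
    rw [Finset.sum_eq_zero fun i _ => hz i]
    rcases eq_or_ne j j' with rfl | hne
    · have hlt : ¬ (j : ℕ) < min m n := fun hc => h ⟨hc, rfl⟩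
      rw [diagonal_apply_eq, dif_neg hlt]
    · rw [diagonal_apply_ne _ hne]

lemma nuclearNorm_sigMat {m n : ℕ} (d : Fin (min m n) → ℝ) (hd : ∀ i, 0 ≤ d i) :
    nuclearNorm (sigMat d) = ∑ i, d i := by
  set R : Matrix (Fin n) (Fin n) ℝ :=
    diagonal (fun j => if h : (j : ℕ) < min m n then d ⟨j, h⟩ else 0) with hR
  have hRpsd : PosSemidef R := by
    refine posSemidef_diagonal_iff.mpr fun j => ?_
    split_ifs
    exacts [hd _, le_refl 0]
  have hR2 : R ^ 2 = (sigMat d)ᵀ * sigMat d := by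
    rw [sigT_mul_sig, pow_two, hR, diagonal_mul_diagonal]
    refine congrArg diagonal (funext fun j => ?_)
    split_ifs with h
    · ring
    · ring
  have heq := hRpsd.eq_sqrt_of_sq_eq (psdT (sigMat d)) hR2
  rw [nuclearNorm_eq_trace_sqrt, ← heq, hR, trace_diagonal]
  exact sum_dite_min d

lemma sum_mul_eq_trace {m n : ℕ} (A B : Matrix (Fin m) (Fin n) ℝ) :
    ∑ i, ∑ j, A i j * B i j = (Aᵀ * B).trace := by
  rw [Matrix.trace]
  simp only [Matrix.diag, Matrix.mul_apply, Matrix.transpose_apply]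
  exact Finset.sum_comm

lemma frobSq_eq_trace {m n : ℕ} (A : Matrix (Fin m) (Fin n) ℝ) :
    frobSq A = (Aᵀ * A).trace := by
  rw [← sum_mul_eq_trace]
  simp [frobSq, sq]

lemma frobSq_conj {m n : ℕ} (P : Matrix (Fin m) (Fin m) ℝ) (Q : Matrix (Fin n) (Fin n) ℝ)
    (hP : Pᵀ * P = 1) (hQ : Qᵀ * Q = 1) (A : Matrix (Fin m) (Fin n) ℝ) :
    frobSq (P * A * Qᵀ) = frobSq A := by
  rw [frobSq_eq_trace, frobSq_eq_trace]
  have hM : (P * A * Qᵀ)ᵀ * (P * A * Qᵀ) = Q * ((Aᵀ * A) * Qᵀ) := by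
    have h1 : Pᵀ * (P * (A * Qᵀ)) = A * Qᵀ := by rw [← Matrix.mul_assoc, hP, Matrix.one_mul]
    simp only [transpose_mul, transpose_transpose, Matrix.mul_assoc, h1]
  rw [hM, ← Matrix.mul_assoc, Matrix.trace_mul_cycle, ← Matrix.mul_assoc, hQ, Matrix.one_mul]

lemma frobSq_decomp {m n : ℕ} (A B C : Matrix (Fin m) (Fin n) ℝ) :
    frobSq (A - C) = frobSq (A - B) + frobSq (B - C)
      + 2 * ∑ i, ∑ j, (A - B) i j * (B - C) i j := by
  simp only [frobSq, Matrix.sub_apply, Finset.mul_sum, ← Finset.sum_add_distrib]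
  refine Finset.sum_congr rfl fun i _ => Finset.sum_congr rfl fun j _ => ?_
  ring

lemma frobSq_nonneg {m n : ℕ} (A : Matrix (Fin m) (Fin n) ℝ) : 0 ≤ frobSq A :=
  Finset.sum_nonneg fun i _ => Finset.sum_nonneg fun j _ => sq_nonneg _

lemma eq_of_frobSq_eq_zero {m n : ℕ} {A B : Matrix (Fin m) (Fin n) ℝ}
    (h : frobSq (A - B) ≤ 0) : A = B := by
  have h0 : frobSq (A - B) = 0 := le_antisymm h (frobSq_nonneg _)
  simp only [frobSq] at h0
  ext i j
  have h1 := (Finset.sum_eq_zero_iff_of_nonneg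
    (fun i (_ : i ∈ Finset.univ) => Finset.sum_nonneg fun j _ => sq_nonneg ((A - B) i j))).mp h0
    i (Finset.mem_univ i)
  have h2 := (Finset.sum_eq_zero_iff_of_nonneg
    (fun j (_ : j ∈ Finset.univ) => sq_nonneg ((A - B) i j))).mp h1 j (Finset.mem_univ j)
  have h3 := pow_eq_zero_iff (n := 2) (by norm_num) |>.mp h2
  exact sub_eq_zero.mp (by simpa using h3)

lemma key_ineq {m n : ℕ} {τ : ℝ} (hτ : 0 ≤ τ) (c : Fin (min m n) → ℝ)
    (hc0 : ∀ i, 0 ≤ c i) (hcτ : ∀ i, c i ≤ τ) (Y : Matrix (Fin m) (Fin n) ℝ) :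
    ∑ i, ∑ j, sigMat c i j * Y i j ≤ τ * nuclearNorm Y := by
  set hA := psdT Y with hAdef
  set lam : Fin n → ℝ := hA.1.eigenvalues with hlam
  set Q : Matrix (Fin n) (Fin n) ℝ := (hA.1.eigenvectorUnitary : Matrix (Fin n) (Fin n) ℝ)
    with hQdef
  have hQmem := hA.1.eigenvectorUnitary.2
  have hQl : Qᵀ * Q = 1 := by
    have := Matrix.UnitaryGroup.star_mul_self hA.1.eigenvectorUnitary
    rwa [Matrix.star_eq_conjTranspose, conjTranspose_eq_transpose_of_trivial] at this
  have hQr : Q * Qᵀ = 1 := by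
    have := Matrix.mem_unitaryGroup_iff.mp hQmem
    rwa [Matrix.star_eq_conjTranspose, conjTranspose_eq_transpose_of_trivial] at this
  have hdiag : Qᵀ * (Yᵀ * Y) * Q = diagonal lam := by
    have := hA.1.conjStarAlgAut_star_eigenvectorUnitary
    rw [Unitary.conjStarAlgAut_star_apply] at this
    rw [Matrix.star_eq_conjTranspose, conjTranspose_eq_transpose_of_trivial] at this
    rw [this]
    refine congrArg diagonal (funext fun j => ?_)
    simp [lam]
  -- step 0 : rotate columns
  have step0 : ∑ i, ∑ j, sigMat c i j * Y i j
      = ∑ i, ∑ j, (sigMat c * Q) i j * (Y * Q) i j := by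
    rw [sum_mul_eq_trace, sum_mul_eq_trace]
    have : (sigMat c * Q)ᵀ * (Y * Q) = Qᵀ * ((sigMat c)ᵀ * Y) * Q := by
      rw [transpose_mul]
      simp only [Matrix.mul_assoc]
    rw [this, Matrix.trace_mul_cycle, ← Matrix.mul_assoc, hQr, Matrix.one_mul]
  rw [step0, Finset.sum_comm]
  -- column norms of Y * Q
  have hYQ : ∀ k : Fin n, ∑ i, ((Y * Q) i k) ^ 2 = lam k := by
    intro k
    have h1 : ∑ i, ((Y * Q) i k) ^ 2 = ((Y * Q)ᵀ * (Y * Q)) k k := by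
      rw [Matrix.mul_apply]
      refine Finset.sum_congr rfl fun i _ => ?_
      rw [transpose_apply, sq]
    rw [h1]
    have h2 : (Y * Q)ᵀ * (Y * Q) = Qᵀ * (Yᵀ * Y) * Q := by
      rw [transpose_mul]; simp only [Matrix.mul_assoc]
    rw [h2, hdiag, diagonal_apply_eq]
  -- column norms of sigMat c * Q
  have hCQ : ∀ k : Fin n, ∑ i, ((sigMat c * Q) i k) ^ 2 ≤ τ ^ 2 := by
    intro k
    have h1 : ∑ i, ((sigMat c * Q) i k) ^ 2 = ((sigMat c * Q)ᵀ * (sigMat c * Q)) k k := by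
      rw [Matrix.mul_apply]
      refine Finset.sum_congr rfl fun i _ => ?_
      rw [transpose_apply, sq]
    have h2 : (sigMat c * Q)ᵀ * (sigMat c * Q) = Qᵀ * ((sigMat c)ᵀ * sigMat c) * Q := by
      rw [transpose_mul]; simp only [Matrix.mul_assoc]
    rw [h1, h2, sigT_mul_sig]
    have h3 : (Qᵀ * diagonal (fun j : Fin n =>
        if h : (j : ℕ) < min m n then c ⟨j, h⟩ * c ⟨j, h⟩ else 0) * Q) k k
        = ∑ j : Fin n, (if h : (j : ℕ) < min m n then c ⟨j, h⟩ * c ⟨j, h⟩ else 0) * (Q j k) ^ 2 := by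
      rw [Matrix.mul_apply]
      refine Finset.sum_congr rfl fun j _ => ?_
      rw [Matrix.mul_diagonal, transpose_apply, sq]
      ring
    rw [h3]
    have h4 : ∑ j : Fin n, (if h : (j : ℕ) < min m n then c ⟨j, h⟩ * c ⟨j, h⟩ else 0) * (Q j k) ^ 2
        ≤ ∑ j : Fin n, τ ^ 2 * (Q j k) ^ 2 := by
      refine Finset.sum_le_sum fun j _ => ?_
      refine mul_le_mul_of_nonneg_right ?_ (sq_nonneg _)
      split_ifs with h
      · calc c ⟨j, h⟩ * c ⟨j, h⟩ ≤ τ * τ :=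
            mul_le_mul (hcτ _) (hcτ _) (hc0 _) hτ
          _ = τ ^ 2 := (sq τ).symm
      · exact sq_nonneg τ
    refine h4.trans ?_
    rw [← Finset.mul_sum]
    have h5 : ∑ j : Fin n, (Q j k) ^ 2 = (Qᵀ * Q) k k := by
      rw [Matrix.mul_apply]
      refine Finset.sum_congr rfl fun j _ => ?_
      rw [transpose_apply, sq]
    rw [h5, hQl, Matrix.one_apply_eq, mul_one]
  -- per-column Cauchy-Schwarz
  have percol : ∀ k : Fin n, ∑ i, (sigMat c * Q) i k * (Y * Q) i k
      ≤ τ * Real.sqrt (lam k) := by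
    intro k
    have hcs := Real.sum_mul_le_sqrt_mul_sqrt Finset.univ
      (fun i => (sigMat c * Q) i k) (fun i => (Y * Q) i k)
    refine hcs.trans ?_
    rw [hYQ k]
    refine mul_le_mul_of_nonneg_right ?_ (Real.sqrt_nonneg _)
    calc Real.sqrt (∑ i, ((sigMat c * Q) i k) ^ 2) ≤ Real.sqrt (τ ^ 2) :=
        Real.sqrt_le_sqrt (hCQ k)
      _ = τ := Real.sqrt_sq hτ
  calc ∑ k, ∑ i, (sigMat c * Q) i k * (Y * Q) i k
      ≤ ∑ k, τ * Real.sqrt (lam k) := Finset.sum_le_sum fun k _ => percol k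
    _ = τ * ∑ k, Real.sqrt (lam k) := by rw [Finset.mul_sum]
    _ = τ * nuclearNorm Y := by rw [nuclearNorm_eq_trace_sqrt, trace_sqrt]

/-- The singular value thresholding operator D_τ(W) = U diag(max(σᵢ−τ,0)) Vᵀ is the
unique minimizer of X ↦ τ‖X‖_* + ½‖X − W‖_F². -/
theorem svt_unique_minimizer {m n : ℕ} (τ : ℝ) (hτ : 0 < τ)
    (W : Matrix (Fin m) (Fin n) ℝ)
    (U : Matrix (Fin m) (Fin m) ℝ) (V : Matrix (Fin n) (Fin n) ℝ)
    (σ : Fin (min m n) → ℝ)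
    (hU : U * Uᵀ = 1) (hU' : Uᵀ * U = 1)
    (hV : V * Vᵀ = 1) (hV' : Vᵀ * V = 1)
    (hσ0 : ∀ i, 0 ≤ σ i)
    (hW : W = U * sigMat σ * Vᵀ) :
    let D : Matrix (Fin m) (Fin n) ℝ := U * sigMat (fun i => max (σ i - τ) 0) * Vᵀ
    (∀ X : Matrix (Fin m) (Fin n) ℝ,
        τ * nuclearNorm D + (1 / 2) * frobSq (D - W)
          ≤ τ * nuclearNorm X + (1 / 2) * frobSq (X - W)) ∧
    (∀ X : Matrix (Fin m) (Fin n) ℝ,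
        τ * nuclearNorm X + (1 / 2) * frobSq (X - W)
          = τ * nuclearNorm D + (1 / 2) * frobSq (D - W) → X = D) := by
  intro D
  set d : Fin (min m n) → ℝ := fun i => max (σ i - τ) 0 with hd
  set g : Fin (min m n) → ℝ := fun i => min (σ i) τ with hg
  have hDdef : D = U * sigMat d * Vᵀ := rfl
  have hd0 : ∀ i, 0 ≤ d i := fun i => le_max_right _ _
  have hg0 : ∀ i, 0 ≤ g i := fun i => le_min (hσ0 i) hτ.le
  have hgτ : ∀ i, g i ≤ τ := fun i => min_le_right _ _
  have hdg : ∀ i, d i * (τ - g i) = 0 := by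
    intro i
    rw [hd, hg]; dsimp only
    rcases le_total (σ i) τ with h1 | h1
    · rw [max_eq_right (by linarith)]; ring
    · rw [min_eq_right h1]; ring
  have hpoint : ∀ i : Fin (min m n), d i - σ i = -(g i) := by
    intro i
    rw [hd, hg]; dsimp only
    rcases le_total (σ i) τ with h1 | h1
    · rw [max_eq_right (by linarith), min_eq_left h1]; ring
    · rw [max_eq_left (by linarith), min_eq_right h1]; ring
  have hsd : sigMat d - sigMat σ = - sigMat g := by
    ext i j
    simp only [Matrix.sub_apply, Matrix.neg_apply, sigMat]
    split_ifs with h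
    · exact hpoint _
    · simp
  have main : ∀ X : Matrix (Fin m) (Fin n) ℝ,
      τ * nuclearNorm D + (1 / 2) * frobSq (D - W) + (1 / 2) * frobSq (X - D)
        ≤ τ * nuclearNorm X + (1 / 2) * frobSq (X - W) := by
    intro X
    set Y : Matrix (Fin m) (Fin n) ℝ := Uᵀ * X * V with hY
    have hX : X = U * Y * Vᵀ := by
      rw [hY]
      symm
      calc U * (Uᵀ * X * V) * Vᵀ = (U * Uᵀ) * (X * (V * Vᵀ)) := by
            simp only [Matrix.mul_assoc]
        _ = X := by rw [hU, hV, Matrix.one_mul, Matrix.mul_one]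
    have hnX : nuclearNorm X = nuclearNorm Y := by
      conv_lhs => rw [hX]
      exact nuclearNorm_conj U V hU' hV' hV Y
    have hnD : nuclearNorm D = ∑ i, d i := by
      rw [hDdef, nuclearNorm_conj U V hU' hV' hV, nuclearNorm_sigMat d hd0]
    have hfXW : frobSq (X - W) = frobSq (Y - sigMat σ) := by
      have hXW : X - W = U * (Y - sigMat σ) * Vᵀ := by
        conv_lhs => rw [hX, hW]
        rw [Matrix.mul_sub, Matrix.sub_mul]
      rw [hXW, frobSq_conj U V hU' hV']
    have hfDW : frobSq (D - W) = frobSq (sigMat d - sigMat σ) := by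
      have hDW : D - W = U * (sigMat d - sigMat σ) * Vᵀ := by
        conv_lhs => rw [hDdef, hW]
        rw [Matrix.mul_sub, Matrix.sub_mul]
      rw [hDW, frobSq_conj U V hU' hV']
    have hfXD : frobSq (X - D) = frobSq (Y - sigMat d) := by
      have hXD : X - D = U * (Y - sigMat d) * Vᵀ := by
        conv_lhs => rw [hX, hDdef]
        rw [Matrix.mul_sub, Matrix.sub_mul]
      rw [hXD, frobSq_conj U V hU' hV']
    rw [hnX, hnD, hfXW, hfDW, hfXD, frobSq_decomp Y (sigMat d) (sigMat σ)]
    have hdgsum : ∑ i, ∑ j, sigMat d i j * sigMat g i j = ∑ i, d i * g i := by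
      rw [sum_mul_eq_trace, sigT_mul_sig, trace_diagonal]
      exact sum_dite_min (fun i => d i * g i)
    have hcross : ∑ i, ∑ j, (Y - sigMat d) i j * (sigMat d - sigMat σ) i j
        = - (∑ i, ∑ j, sigMat g i j * Y i j) + ∑ i, d i * g i := by
      rw [hsd, ← hdgsum]
      rw [← Finset.sum_neg_distrib, ← Finset.sum_add_distrib]
      refine Finset.sum_congr rfl fun i _ => ?_
      rw [← Finset.sum_neg_distrib, ← Finset.sum_add_distrib]
      refine Finset.sum_congr rfl fun j _ => ?_
      simp only [Matrix.sub_apply, Matrix.neg_apply]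
      ring
    rw [hcross]
    have hτd : τ * ∑ i, d i = ∑ i, d i * g i := by
      rw [Finset.mul_sum]
      refine Finset.sum_congr rfl fun i _ => ?_
      have := hdg i
      nlinarith [hdg i]
    have hkey := key_ineq hτ.le g hg0 hgτ Y
    linarith
  refine ⟨fun X => ?_, fun X hXeq => ?_⟩
  · have h1 := main X
    have h2 := frobSq_nonneg (X - D)
    linarith
  · have h1 := main X
    have h3 : frobSq (X - D) ≤ 0 := by linarith
    exact eq_of_frobSq_eq_zero h3
end

section
/- For a third-order tensor A, the block circulant matrix of the t-product factors as bcirc(A * B) = bcirc(A) · bcirc(B): for A ∈ ℝ^{n1×n2×n3} and B ∈ ℝ^{n2×n4×n3}, the block circulant matrix of A * B equals the matrix product of the block circulant matrices of A and B. -/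
open Matrix

/-- The tensor (conjugate) transpose: transpose each frontal slice and reverse
the order of slices 2 through n3. -/
def tTrans {n1 n2 n3 : ℕ} (A : Fin n1 → Fin n2 → Fin n3 → ℝ) :
    Fin n2 → Fin n1 → Fin n3 → ℝ :=
  fun i j k => A j i (-k)

/-- The trace of a tensor: the sum of the traces of its frontal slices. -/
def tTrace {n n3 : ℕ} (A : Fin n → Fin n → Fin n3 → ℝ) : ℝ :=
  ∑ k : Fin n3, (fSlice A k).trace

/-- The tensor inner product ⟨U,V⟩ = Σ_{ijk} U_{ijk} V_{ijk}. -/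
def tInner {n1 n2 n3 : ℕ} (U V : Fin n1 → Fin n2 → Fin n3 → ℝ) : ℝ :=
  ∑ i, ∑ j, ∑ k, U i j k * V i j k

/-- The block circulant matrix of a third-order tensor:
the (r,s) block is the frontal slice A^(r-s mod n3). -/
def bcirc {n1 n2 n3 : ℕ} (A : Fin n1 → Fin n2 → Fin n3 → ℝ) :
    Matrix (Fin n3 × Fin n1) (Fin n3 × Fin n2) ℝ :=
  fun p q => A p.2 q.2 (p.1 - q.1)

lemma fin_add_sub_cancel {n : ℕ} (a b : Fin n) : a + b - b = a := by
  cases n with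
  | zero => exact a.elim0
  | succ n => exact add_sub_cancel_right a b

lemma fin_sub_add_cancel {n : ℕ} (a b : Fin n) : a - b + b = a := by
  cases n with
  | zero => exact a.elim0
  | succ n => exact sub_add_cancel a b

lemma fin_sub_sub {n : ℕ} (a b c : Fin n) : a - b - c = a - (b + c) := by
  cases n with
  | zero => exact a.elim0
  | succ n => exact sub_sub a b c

/-- bcirc(A * B) = bcirc(A) · bcirc(B). -/
theorem bcirc_tProd {n1 n2 n4 n3 : ℕ}
    (A : Fin n1 → Fin n2 → Fin n3 → ℝ) (B : Fin n2 → Fin n4 → Fin n3 → ℝ) :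
    bcirc (tProd A B) = bcirc A * bcirc B := by
  ext ⟨k, i⟩ ⟨l, j⟩
  simp only [bcirc, tProd, fSlice, Matrix.mul_apply, Fintype.sum_prod_type]
  refine Finset.sum_nbij' (fun t => t + l) (fun s => s - l) (by simp) (by simp)
    (fun t _ => fin_add_sub_cancel t l) (fun s _ => fin_sub_add_cancel s l) ?_
  intro t _
  refine Finset.sum_congr rfl fun m _ => ?_
  congr 2
  · rw [fin_sub_sub, add_comm]
  · rw [fin_add_sub_cancel]
end
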